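/- Under the NAG iteration with L-smooth convex f, 0 < s ≤ 1/L and r ≥ 2, the Lyapunov difference satisfies E(k+1) - E(k) ≤ -(s²k(k+r)/2)‖∇f(y_{k-1})‖² - s[(r-2)k + r² - r - 1](f(y_k) - f(x*)), where E(k) = s·k·(k+r)(f(y_{k-1}) - f(x*)) + (1/2)‖√s·k·v_{k-1} + r(y_k - x*) + s·k·∇f(y_{k-1})‖². -/

import Mathlib

open InnerProductSpace

local notation "⟪" x ", " y "⟫" => @inner ℝ _ _ x y

section auxsec
variable {E : Type*} [NormedAddCommGroup E] [InnerProductSpace ℝ E] [CompleteSpace E]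
variable {f : E → ℝ} {g : E → E} {L : ℝ}

lemma line_hasDerivAt (hgrad : ∀ z, HasGradientAt f (g z) z) (z w : E) (t : ℝ) :
    HasDerivAt (fun t : ℝ => f (z + t • (w - z))) ⟪g (z + t • (w - z)), w - z⟫ t := by
  have hc : HasDerivAt (fun t : ℝ => z + t • (w - z)) (w - z) t := by
    simpa using ((hasDerivAt_id t).smul_const (w - z)).const_add z
  have h := (hasGradientAt_iff_hasFDerivAt.mp (hgrad (z + t • (w - z)))).comp_hasDerivAt t hc
  simp [toDual_apply_apply] at h; exact h

lemma convex_lower (hconv : ConvexOn ℝ Set.univ f) (hgrad : ∀ z, HasGradientAt f (g z) z)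
    (z w : E) : f z + ⟪g z, w - z⟫ ≤ f w := by
  have hd := line_hasDerivAt hgrad z w 0
  rw [show z + (0:ℝ) • (w - z) = z by simp] at hd
  have hts : Filter.Tendsto (fun t : ℝ => (f (z + t • (w - z)) - f z) / t)
      (nhdsWithin 0 (Set.Ioi 0)) (nhds ⟪g z, w - z⟫) := by
    have := hasDerivAt_iff_tendsto_slope.mp hd
    refine (this.mono_left (nhdsWithin_mono _ ?_)).congr ?_
    · intro t ht
      exact ne_of_gt ht
    · intro t
      simp [slope_def_field]
  have hev : ∀ᶠ t in nhdsWithin (0:ℝ) (Set.Ioi 0),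
      (f (z + t • (w - z)) - f z) / t ≤ f w - f z := by
    filter_upwards [Ioo_mem_nhdsGT_of_mem (Set.left_mem_Ico.mpr one_pos)] with t ht
    have h1 : z + t • (w - z) = (1 - t) • z + t • w := by
      rw [sub_smul, smul_sub, one_smul]; abel
    have h2 := hconv.2 (Set.mem_univ z) (Set.mem_univ w)
      (by linarith [ht.1, ht.2] : (0:ℝ) ≤ 1 - t) (le_of_lt ht.1) (by ring)
    rw [← h1] at h2
    rw [div_le_iff₀ ht.1]
    simp only [smul_eq_mul] at h2
    nlinarith [h2]
  have := le_of_tendsto hts hev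
  linarith


lemma descent (hL : 0 < L) (hgrad : ∀ z, HasGradientAt f (g z) z)
    (hlip : ∀ z w, ‖g z - g w‖ ≤ L * ‖z - w‖) (z w : E) :
    f w ≤ f z + ⟪g z, w - z⟫ + L / 2 * ‖w - z‖ ^ 2 := by
  have hgc : Continuous g := by
    have : LipschitzWith (Real.toNNReal L) g :=
      LipschitzWith.of_dist_le_mul (fun a b => by
        rw [dist_eq_norm, dist_eq_norm, Real.coe_toNNReal _ hL.le]; exact hlip a b)
    exact this.continuous
  have hcont : Continuous (fun t : ℝ => ⟪g (z + t • (w - z)), w - z⟫) := by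
    apply Continuous.inner
    · exact hgc.comp (continuous_const.add (continuous_id.smul continuous_const))
    · exact continuous_const
  have hint : IntervalIntegrable (fun t : ℝ => ⟪g (z + t • (w - z)), w - z⟫)
      MeasureTheory.volume 0 1 := hcont.intervalIntegrable 0 1
  have hftc : f w - f z = ∫ t in (0:ℝ)..1, ⟪g (z + t • (w - z)), w - z⟫ := by
    have := intervalIntegral.integral_eq_sub_of_hasDerivAt
      (fun t _ => line_hasDerivAt hgrad z w t) hint
    rw [this]; simp
  have hmono : (∫ t in (0:ℝ)..1, ⟪g (z + t • (w - z)), w - z⟫)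
      ≤ ∫ t in (0:ℝ)..1, (⟪g z, w - z⟫ + t * (L * ‖w - z‖ ^ 2)) := by
    apply intervalIntegral.integral_mono_on zero_le_one hint
    · exact ((continuous_const.add ((continuous_id').mul continuous_const)).intervalIntegrable 0 1)
    · intro t ht
      have h1 : ⟪g (z + t • (w - z)), w - z⟫ - ⟪g z, w - z⟫
          = ⟪g (z + t • (w - z)) - g z, w - z⟫ := by rw [inner_sub_left]
      have h2 : ⟪g (z + t • (w - z)) - g z, w - z⟫ ≤ ‖g (z + t • (w - z)) - g z‖ * ‖w - z‖ :=
        real_inner_le_norm _ _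
      have h3 : ‖g (z + t • (w - z)) - g z‖ ≤ L * ‖t • (w - z)‖ := by
        have := hlip (z + t • (w - z)) z
        simpa using this
      have h4 : ‖t • (w - z)‖ = t * ‖w - z‖ := by
        rw [norm_smul, Real.norm_eq_abs, abs_of_nonneg ht.1]
      have h5 : ‖g (z + t • (w - z)) - g z‖ * ‖w - z‖ ≤ L * (t * ‖w - z‖) * ‖w - z‖ := by
        apply mul_le_mul_of_nonneg_right _ (norm_nonneg _)
        rw [← h4]; exact h3
      have h6 : t * (L * ‖w - z‖ ^ 2) = L * (t * ‖w - z‖) * ‖w - z‖ := by ring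
      linarith [h1, h2, h5]
  have hval : (∫ t in (0:ℝ)..1, (⟪g z, w - z⟫ + t * (L * ‖w - z‖ ^ 2)))
      = ⟪g z, w - z⟫ + L / 2 * ‖w - z‖ ^ 2 := by
    have hB : (∫ t in (0:ℝ)..1, t * (L * ‖w - z‖ ^ 2)) = L / 2 * ‖w - z‖ ^ 2 := by
      rw [intervalIntegral.integral_mul_const, integral_id]; ring
    rw [intervalIntegral.integral_add (g := fun t : ℝ => t * (L * ‖w - z‖ ^ 2)) intervalIntegrable_const
      (((continuous_id').mul continuous_const).intervalIntegrable 0 1),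
      intervalIntegral.integral_const, hB]
    simp
  linarith [hftc, hmono.trans_eq hval]

lemma coco (hL : 0 < L) (hconv : ConvexOn ℝ Set.univ f)
    (hgrad : ∀ z, HasGradientAt f (g z) z)
    (hlip : ∀ z w, ‖g z - g w‖ ≤ L * ‖z - w‖) {s : ℝ} (hs : 0 < s) (hsL : s ≤ 1 / L)
    (z w : E) :
    f z + ⟪g z, w - z⟫ + s / 2 * ‖g w - g z‖ ^ 2 ≤ f w := by
  set Δ := g w - g z with hΔ
  set u := w - L⁻¹ • Δ with hu
  have h1 := convex_lower hconv hgrad z u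
  have h2 := descent hL hgrad hlip w u
  have e1 : u - z = (w - z) - L⁻¹ • Δ := by rw [hu]; abel
  have e2 : u - w = -(L⁻¹ • Δ) := by rw [hu]; abel
  have i1 : ⟪g z, u - z⟫ = ⟪g z, w - z⟫ - L⁻¹ * ⟪g z, Δ⟫ := by
    rw [e1, inner_sub_right, real_inner_smul_right]
  have i2 : ⟪g w, u - w⟫ = -(L⁻¹ * ⟪g w, Δ⟫) := by
    rw [e2, inner_neg_right, real_inner_smul_right]
  have i3 : ‖u - w‖ ^ 2 = L⁻¹ ^ 2 * ‖Δ‖ ^ 2 := by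
    rw [e2, norm_neg, norm_smul, mul_pow, Real.norm_eq_abs, sq_abs]
  have i4 : ⟪g w, Δ⟫ - ⟪g z, Δ⟫ = ‖Δ‖ ^ 2 := by
    rw [← inner_sub_left, ← hΔ, real_inner_self_eq_norm_sq]
  rw [i1] at h1
  rw [i2, i3] at h2
  have hL' : L⁻¹ - L / 2 * L⁻¹ ^ 2 = 1 / (2 * L) := by field_simp; ring
  have hsl1 : s * L ≤ 1 := (le_div_iff₀ hL).mp hsL
  have hs' : s / 2 ≤ 1 / (2 * L) := by
    rw [div_le_div_iff₀ two_pos (by linarith)]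
    nlinarith [hsl1]
  have i4' : L⁻¹ * ⟪g w, Δ⟫ - L⁻¹ * ⟪g z, Δ⟫ = L⁻¹ * ‖Δ‖ ^ 2 := by
    rw [← mul_sub, i4]
  have key : f z + ⟪g z, w - z⟫ + (L⁻¹ - L / 2 * L⁻¹ ^ 2) * ‖Δ‖ ^ 2 ≤ f w := by
    nlinarith [h1, h2, i4']
  rw [hL'] at key
  have hfin := mul_le_mul_of_nonneg_right hs' (sq_nonneg ‖Δ‖)
  linarith [key, hfin]

lemma grad_min_zero (hgrad : ∀ z, HasGradientAt f (g z) z) {xs : E}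
    (hmin : ∀ z, f xs ≤ f z) : g xs = 0 := by
  have hloc : IsLocalMin f xs := Filter.Eventually.of_forall hmin
  have h0 := hloc.hasFDerivAt_eq_zero (hasGradientAt_iff_hasFDerivAt.mp (hgrad xs))
  have := congrArg (fun F => (toDual ℝ E).symm F) h0
  simpa using this

end auxsec

set_option maxHeartbeats 1000000 in
theorem stmt_6 {d : ℕ} (f : EuclideanSpace ℝ (Fin d) → ℝ)
    (g : EuclideanSpace ℝ (Fin d) → EuclideanSpace ℝ (Fin d)) (L : ℝ) (hL : 0 < L)
    (hconv : ConvexOn ℝ Set.univ f)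
    (hgrad : ∀ z, HasGradientAt f (g z) z)
    (hlip : ∀ z w, ‖g z - g w‖ ≤ L * ‖z - w‖)
    (xs : EuclideanSpace ℝ (Fin d)) (hmin : ∀ z, f xs ≤ f z)
    (s r : ℝ) (hs : 0 < s) (hsL : s ≤ 1 / L) (hr : 2 ≤ r)
    (x y : ℕ → EuclideanSpace ℝ (Fin d))
    (hx0 : x 0 = y 0)
    (hx : ∀ k : ℕ, x (k + 1) = y k - s • g (y k))
    (hy : ∀ k : ℕ, y (k + 1) = x (k + 1) + (((k : ℝ)) / ((k : ℝ) + r + 1)) • (x (k + 1) - x k))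
    (v : ℕ → EuclideanSpace ℝ (Fin d))
    (hv : ∀ k : ℕ, v k = (Real.sqrt s)⁻¹ • (y (k + 1) - y k)) :
    ∀ k : ℕ,
      (s * ((k : ℝ) + 2) * ((k : ℝ) + 2 + r) * (f (y (k + 1)) - f xs) +
          (1 / 2) * ‖(Real.sqrt s * ((k : ℝ) + 2)) • v (k + 1) + r • (y (k + 2) - xs) +
              (s * ((k : ℝ) + 2)) • g (y (k + 1))‖ ^ 2) -
        (s * ((k : ℝ) + 1) * ((k : ℝ) + 1 + r) * (f (y k) - f xs) +
          (1 / 2) * ‖(Real.sqrt s * ((k : ℝ) + 1)) • v k + r • (y (k + 1) - xs) +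
              (s * ((k : ℝ) + 1)) • g (y k)‖ ^ 2) ≤
      -(s ^ 2 * ((k : ℝ) + 1) * ((k : ℝ) + 1 + r) / 2) * ‖g (y k)‖ ^ 2 -
        s * ((r - 2) * ((k : ℝ) + 1) + r ^ 2 - r - 1) * (f (y (k + 1)) - f xs) := by
  intro k
  have hr0 : (0:ℝ) < r := lt_of_lt_of_le two_pos hr
  have hk0 : (0:ℝ) ≤ (k:ℝ) := Nat.cast_nonneg k
  have hgxs : g xs = 0 := grad_min_zero hgrad hmin
  have hsq : Real.sqrt s ≠ 0 := ne_of_gt (Real.sqrt_pos.mpr hs)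
  have hsc : ∀ c : ℝ, (Real.sqrt s * c) * (Real.sqrt s)⁻¹ = c := by
    intro c; field_simp
  have hsv1 : (Real.sqrt s * ((k:ℝ)+1)) • v k = ((k:ℝ)+1) • (y (k+1) - y k) := by
    rw [hv k, smul_smul, hsc]
  have hsv2 : (Real.sqrt s * ((k:ℝ)+2)) • v (k+1) = ((k:ℝ)+2) • (y (k+2) - y (k+1)) := by
    rw [hv (k+1), smul_smul, hsc]
  rw [hsv1, hsv2]
  set G : EuclideanSpace ℝ (Fin d) := g (y (k+1)) with hGdef
  set G0 : EuclideanSpace ℝ (Fin d) := g (y k) with hG0def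
  set W1 : EuclideanSpace ℝ (Fin d) :=
    ((k:ℝ)+1) • (y (k+1) - y k) + r • (y (k+1) - xs) + (s*((k:ℝ)+1)) • G0 with hW1def
  set W2 : EuclideanSpace ℝ (Fin d) :=
    ((k:ℝ)+2) • (y (k+2) - y (k+1)) + r • (y (k+2) - xs) + (s*((k:ℝ)+2)) • G with hW2def
  have e3 : s • G0 = y k - x (k+1) := by rw [hG0def, hx k]; abel
  have e4 : s • G = y (k+1) - x (k+2) := by rw [hGdef, hx (k+1)]; abel
  have e2 : y (k+2) = x (k+2) + (((k:ℝ)+1)/(((k:ℝ)+1)+r+1)) • (x (k+2) - x (k+1)) := by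
    have h := hy (k+1)
    push_cast at h
    exact h
  have hW1Y : W1 = ((k:ℝ)+1) • (y (k+1) - x (k+1)) + r • (y (k+1) - xs) := by
    rw [hW1def, show (s*((k:ℝ)+1)) • G0 = ((k:ℝ)+1) • (y k - x (k+1)) by
      rw [mul_comm, mul_smul, e3]]
    module
  have hW2Y : W2 = ((k:ℝ)+2) • (y (k+2) - x (k+2)) + r • (y (k+2) - xs) := by
    rw [hW2def, show (s*((k:ℝ)+2)) • G = ((k:ℝ)+2) • (y (k+1) - x (k+2)) by
      rw [mul_comm, mul_smul, e4]]
    module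
  have hden : ((k:ℝ)+1)+r+1 ≠ 0 := by positivity
  have hW2X : W2 = ((k:ℝ)+1) • (x (k+2) - x (k+1)) + r • (x (k+2) - xs) := by
    rw [hW2Y, e2]
    match_scalars <;> field_simp <;> ring
  have hG' : G = s⁻¹ • (y (k+1) - x (k+2)) := by
    rw [← e4, smul_smul, inv_mul_cancel₀ (ne_of_gt hs), one_smul]
  have hW2eq : W2 = W1 + (-(s*((k:ℝ)+1+r))) • G := by
    rw [hW2X, hW1Y, hG']
    match_scalars <;> field_simp <;> ring
  have hnormD : ‖(-(s*((k:ℝ)+1+r))) • G‖^2 = (s*((k:ℝ)+1+r))^2 * ‖G‖^2 := by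
    rw [norm_smul, Real.norm_eq_abs, mul_pow, sq_abs, neg_pow]
    ring
  have hnorm : ‖W2‖^2 = ‖W1‖^2 + 2 * ⟪W1, (-(s*((k:ℝ)+1+r))) • G⟫
      + (s*((k:ℝ)+1+r))^2 * ‖G‖^2 := by
    rw [hW2eq, ← hnormD]
    exact norm_add_sq_real W1 _
  have hinner : ⟪W1, (-(s*((k:ℝ)+1+r))) • G⟫
      = (-(s*((k:ℝ)+1+r))) * ( ((k:ℝ)+1) * ⟪y (k+1) - y k, G⟫
        + r * ⟪y (k+1) - xs, G⟫ + (s*((k:ℝ)+1)) * ⟪G0, G⟫ ) := by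
    rw [real_inner_smul_right, hW1def, inner_add_left, inner_add_left,
      real_inner_smul_left, real_inner_smul_left, real_inner_smul_left]
  have key1 := coco hL hconv hgrad hlip hs hsL (y (k+1)) (y k)
  have key2 := coco hL hconv hgrad hlip hs hsL (y (k+1)) xs
  rw [hgxs] at key2
  have r1 : ⟪G, y k - y (k+1)⟫ = -⟪y (k+1) - y k, G⟫ := by
    rw [real_inner_comm, show y k - y (k+1) = -(y (k+1) - y k) by abel, inner_neg_left]
  have r2 : ⟪G, xs - y (k+1)⟫ = -⟪y (k+1) - xs, G⟫ := by
    rw [real_inner_comm, show xs - y (k+1) = -(y (k+1) - xs) by abel, inner_neg_left]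
  have r3 : ‖G0 - G‖^2 = ‖G0‖^2 - 2 * ⟪G0, G⟫ + ‖G‖^2 := norm_sub_sq_real G0 G
  have r4 : ‖(0:EuclideanSpace ℝ (Fin d)) - G‖^2 = ‖G‖^2 := by
    rw [zero_sub, norm_neg]
  rw [r1, r3] at key1
  rw [r2, r4] at key2
  have c1 : (0:ℝ) ≤ s * ((k:ℝ)+1+r) * ((k:ℝ)+1) :=
    mul_nonneg (mul_nonneg hs.le (by linarith)) (by linarith)
  have c2 : (0:ℝ) ≤ s * ((k:ℝ)+1+r) * r :=
    mul_nonneg (mul_nonneg hs.le (by linarith)) (by linarith)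
  have h1' := mul_le_mul_of_nonneg_left key1 c1
  have h2' := mul_le_mul_of_nonneg_left key2 c2
  rw [hnorm, hinner]
  linarith [h1', h2']
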